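/- Let (P,⪯₊,⪯₋) be a compatible double poset, let F₊ ⊆ P be a filter of (P,⪯₊) and F₋ ⊆ P a filter of (P,⪯₋). Then the point 1_{F₊} − 1_{F₋} is an extreme point (vertex) of the Minkowski difference O(P,⪯₊) − O(P,⪯₋) if and only if min_{⪯₊}(F₊) ∩ min_{⪯₋}(F₋) = ∅ and max_{⪯₊}(P ∖ F₊) ∩ max_{⪯₋}(P ∖ F₋) = ∅, where min_{⪯}(S) and max_{⪯}(S) denote the sets of minimal, respectively maximal, elements of S with respect to ⪯. -/

import Mathlib

set_option linter.unusedSectionVars false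
set_option linter.unusedVariables false
set_option linter.deprecated false
set_option linter.unreachableTactic false
set_option linter.unusedTactic false

open Set Pointwise

/-- The order polytope of a finite poset `(P, le)`: order-preserving maps into `[0,1]`. -/
def orderPoly (P : Type*) [Fintype P] (le : P → P → Prop) : Set (P → ℝ) :=
  {f | (∀ a, 0 ≤ f a ∧ f a ≤ 1) ∧ ∀ a b, le a b → f a ≤ f b}

/-- A double poset is compatible if some linear order refines both partial orders. -/
def Compatible (P : Type*) (lep lem : P → P → Prop) : Prop :=
  ∃ l : P → P → Prop, IsLinearOrder P l ∧
    (∀ a b, lep a b → l a b) ∧ (∀ a b, lem a b → l a b)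

/-- A filter (up-set) of the poset `(P, le)`. -/
def IsUpSet {P : Type*} (le : P → P → Prop) (F : Set P) : Prop :=
  ∀ a ∈ F, ∀ b, le a b → b ∈ F

/-- The set of minimal elements of `S` with respect to `le`. -/
def minSet {P : Type*} (le : P → P → Prop) (S : Set P) : Set P :=
  {a ∈ S | ∀ b ∈ S, le b a → b = a}

/-- The set of maximal elements of `S` with respect to `le`. -/
def maxSet {P : Type*} (le : P → P → Prop) (S : Set P) : Set P :=
  {a ∈ S | ∀ b ∈ S, le a b → b = a}


namespace DPAux
variable {P : Type*} [Fintype P]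

/-- sum of `c` over a set -/
noncomputable def cS (c : P → ℝ) (S : Set P) : ℝ := ∑ a, S.indicator c a

/-- the linear functional with coefficients `c` -/
noncomputable def phi (c : P → ℝ) (f : P → ℝ) : ℝ := ∑ a, c a * f a

lemma phi_indicator (c : P → ℝ) (S : Set P) :
    phi c (S.indicator (fun _ => (1:ℝ))) = cS c S := by
  unfold phi cS
  refine Finset.sum_congr rfl fun a _ => ?_
  by_cases h : a ∈ S <;> simp [h]

lemma phi_sub (c f g : P → ℝ) : phi c (f - g) = phi c f - phi c g := by
  unfold phi
  rw [← Finset.sum_sub_distrib]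
  exact Finset.sum_congr rfl fun a _ => by simp [Pi.sub_apply]; ring

lemma phi_neg (c f : P → ℝ) : phi (-c) f = - phi c f := by
  unfold phi
  rw [← Finset.sum_neg_distrib]
  exact Finset.sum_congr rfl fun a _ => by simp

lemma cS_neg (c : P → ℝ) (S : Set P) : cS (-c) S = - cS c S := by
  unfold cS
  rw [← Finset.sum_neg_distrib]
  refine Finset.sum_congr rfl fun a _ => ?_
  by_cases h : a ∈ S <;> simp [h]

lemma phi_comb (c x y : P → ℝ) (α β : ℝ) :
    phi c (α • x + β • y) = α * phi c x + β * phi c y := by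
  unfold phi
  rw [Finset.mul_sum, Finset.mul_sum, ← Finset.sum_add_distrib]
  exact Finset.sum_congr rfl fun a _ => by simp [Pi.add_apply]; ring

lemma cS_sub_cS (c : P → ℝ) (A B : Set P) :
    cS c A - cS c B = cS c (A \ B) - cS c (B \ A) := by
  unfold cS
  rw [← Finset.sum_sub_distrib, ← Finset.sum_sub_distrib]
  refine Finset.sum_congr rfl fun a _ => ?_
  by_cases hA : a ∈ A <;> by_cases hB : a ∈ B <;>
    simp [Set.indicator_apply, hA, hB]

lemma cS_eq_sum_filter (c : P → ℝ) (S : Set P) [DecidablePred (· ∈ S)] :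
    cS c S = ∑ a ∈ Finset.univ.filter (· ∈ S), c a := by
  unfold cS
  rw [Finset.sum_filter]
  refine Finset.sum_congr rfl fun a _ => ?_
  by_cases h : a ∈ S <;> simp [h]

end DPAux
namespace DPAux
variable {P : Type*} [Fintype P]

lemma indicator_mem_orderPoly {lep : P → P → Prop} {F : Set P} (hF : IsUpSet lep F) :
    F.indicator (fun _ => (1:ℝ)) ∈ orderPoly P lep := by
  classical
  constructor
  · intro a
    by_cases h : a ∈ F <;> simp [h]
  · intro a b hab
    by_cases ha : a ∈ F
    · have hb : b ∈ F := hF a ha b hab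
      simp [ha, hb]
    · by_cases hb : b ∈ F <;> simp [ha, hb]

lemma phi_le {lep : P → P → Prop} {F : Set P} {c : P → ℝ}
    (hc : ∀ F', IsUpSet lep F' → cS c F' ≤ cS c F) :
    ∀ f ∈ orderPoly P lep, phi c f ≤ cS c F := by
  classical
  suffices H : ∀ k : ℕ, ∀ f ∈ orderPoly P lep,
      ((Finset.univ.image f).filter (fun x => x ≠ 0 ∧ x ≠ 1)).card ≤ k →
      phi c f ≤ cS c F by
    intro f hf
    exact H _ f hf le_rfl
  intro k
  induction k with
  | zero =>
    intro f hf hcard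
    have hval : ∀ a, f a = 0 ∨ f a = 1 := by
      intro a
      by_contra h
      push_neg at h
      have hmem : f a ∈ (Finset.univ.image f).filter (fun x => x ≠ 0 ∧ x ≠ 1) := by
        rw [Finset.mem_filter]
        exact ⟨Finset.mem_image_of_mem f (Finset.mem_univ a), h.1, h.2⟩
      have := Finset.card_pos.mpr ⟨_, hmem⟩
      omega
    set F' : Set P := {a | f a = 1} with hF'
    have hfeq : f = F'.indicator (fun _ => (1:ℝ)) := by
      funext a
      rcases hval a with h0 | h1
      · have : a ∉ F' := by simp [hF', h0]
        simp [this, h0]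
      · have : a ∈ F' := h1
        simp [this, h1]
    have hup : IsUpSet lep F' := by
      intro a ha b hab
      have h1 : f a = 1 := ha
      exact le_antisymm (hf.1 b).2 (h1 ▸ hf.2 a b hab)
    rw [hfeq, phi_indicator]
    exact hc F' hup
  | succ k IH =>
    intro f hf hcard
    by_cases hk : ((Finset.univ.image f).filter (fun x => x ≠ 0 ∧ x ≠ 1)).card ≤ k
    · exact IH f hf hk
    · have hne : ((Finset.univ.image f).filter (fun x => x ≠ 0 ∧ x ≠ 1)).Nonempty :=
        Finset.card_pos.mp (by omega)
      obtain ⟨θ, hθ⟩ := hne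
      rw [Finset.mem_filter] at hθ
      have hθim := hθ.1
      have hθ0 : θ ≠ 0 := hθ.2.1
      have hθ1 : θ ≠ 1 := hθ.2.2
      obtain ⟨a₀, -, ha₀⟩ := Finset.mem_image.mp hθim
      have hθpos : 0 < θ := lt_of_le_of_ne (ha₀ ▸ (hf.1 a₀).1) (Ne.symm hθ0)
      have hθlt : θ < 1 := lt_of_le_of_ne (ha₀ ▸ (hf.1 a₀).2) hθ1
      set s : ℝ := ∑ a ∈ Finset.univ.filter (fun a => f a = θ), c a with hs
      have main : ∀ t : ℝ, 0 ≤ t → t ≤ 1 → t ≠ θ →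
          (t ∈ Finset.univ.image f ∨ t = 0 ∨ t = 1) →
          (∀ v ∈ Finset.univ.image f, (v < θ → v ≤ t) ∧ (θ < v → t ≤ v)) →
          0 ≤ (t - θ) * s → phi c f ≤ cS c F := by
        intro t h0t ht1 htθ htmem hsep hsign
        set g : P → ℝ := fun a => if f a = θ then t else f a with hg
        have hg_mem : g ∈ orderPoly P lep := by
          constructor
          · intro a
            simp only [hg]
            split
            · exact ⟨h0t, ht1⟩
            · exact hf.1 a
          · intro a b hab
            have hfab := hf.2 a b hab
            simp only [hg]
            by_cases ha : f a = θ <;> by_cases hb : f b = θ <;> simp [ha, hb]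
            · exact (hsep (f b) (Finset.mem_image_of_mem f (Finset.mem_univ b))).2
                (lt_of_le_of_ne (ha ▸ hfab) (Ne.symm hb))
            · exact (hsep (f a) (Finset.mem_image_of_mem f (Finset.mem_univ a))).1
                (lt_of_le_of_ne (hb ▸ hfab) ha)
            · exact hfab
        have hfg : phi c g - phi c f = (t - θ) * s := by
          unfold phi
          rw [← Finset.sum_sub_distrib, hs, Finset.mul_sum, Finset.sum_filter]
          refine Finset.sum_congr rfl fun a _ => ?_
          by_cases hfa : f a = θ
          · simp only [hg, hfa, if_pos]
            ring
          · simp [hg, hfa]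
        have hcard_g :
            ((Finset.univ.image g).filter (fun x => x ≠ 0 ∧ x ≠ 1)).card ≤ k := by
          have hsub : (Finset.univ.image g).filter (fun x => x ≠ 0 ∧ x ≠ 1) ⊆
              ((Finset.univ.image f).filter (fun x => x ≠ 0 ∧ x ≠ 1)).erase θ := by
            intro x hx
            rw [Finset.mem_filter] at hx
            have hxim := hx.1
            have hx0 : x ≠ 0 := hx.2.1
            have hx1 : x ≠ 1 := hx.2.2
            obtain ⟨a, -, hga⟩ := Finset.mem_image.mp hxim
            rw [Finset.mem_erase, Finset.mem_filter]
            by_cases hfa : f a = θ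
            · have hxt : x = t := by rw [← hga]; simp [hg, hfa]
              subst hxt
              rcases htmem with h | h | h
              · exact ⟨htθ, h, hx0, hx1⟩
              · exact absurd h hx0
              · exact absurd h hx1
            · have hxf : x = f a := by rw [← hga]; simp [hg, hfa]
              subst hxf
              exact ⟨hfa, Finset.mem_image_of_mem f (Finset.mem_univ a), hx0, hx1⟩
          have h1 := Finset.card_le_card hsub
          have h2 := Finset.card_erase_of_mem (by
            rw [Finset.mem_filter]; exact ⟨hθim, hθ0, hθ1⟩ :
            θ ∈ (Finset.univ.image f).filter (fun x => x ≠ 0 ∧ x ≠ 1))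
          omega
        have := IH g hg_mem hcard_g
        linarith
      by_cases hsign : 0 ≤ s
      · set T := ((Finset.univ.image f) ∪ {1}).filter (fun x => θ < x) with hT
        have hTne : T.Nonempty := ⟨1, by
          rw [hT, Finset.mem_filter, Finset.mem_union]
          exact ⟨Or.inr (Finset.mem_singleton_self 1), hθlt⟩⟩
        set t := T.min' hTne with ht
        have htT : t ∈ T := T.min'_mem hTne
        rw [hT, Finset.mem_filter, Finset.mem_union] at htT
        have hθt : θ < t := htT.2
        have ht1 : t ≤ 1 := T.min'_le 1 (by
          rw [hT, Finset.mem_filter, Finset.mem_union]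
          exact ⟨Or.inr (Finset.mem_singleton_self 1), hθlt⟩)
        refine main t (le_of_lt (hθpos.trans hθt)) ht1 (ne_of_gt hθt) ?_ ?_ ?_
        · rcases htT.1 with h | h
          · exact Or.inl h
          · exact Or.inr (Or.inr (Finset.mem_singleton.mp h))
        · intro v hv
          constructor
          · intro hvθ; exact le_of_lt (hvθ.trans hθt)
          · intro hθv
            exact T.min'_le v (by
              rw [hT, Finset.mem_filter, Finset.mem_union]
              exact ⟨Or.inl hv, hθv⟩)
        · exact mul_nonneg (by linarith) hsign
      · push_neg at hsign
        set T := ((Finset.univ.image f) ∪ {0}).filter (fun x => x < θ) with hT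
        have hTne : T.Nonempty := ⟨0, by
          rw [hT, Finset.mem_filter, Finset.mem_union]
          exact ⟨Or.inr (Finset.mem_singleton_self 0), hθpos⟩⟩
        set t := T.max' hTne with ht
        have htT : t ∈ T := T.max'_mem hTne
        rw [hT, Finset.mem_filter, Finset.mem_union] at htT
        have hθt : t < θ := htT.2
        have h0t : 0 ≤ t := T.le_max' 0 (by
          rw [hT, Finset.mem_filter, Finset.mem_union]
          exact ⟨Or.inr (Finset.mem_singleton_self 0), hθpos⟩)
        refine main t h0t (le_of_lt (hθt.trans hθlt)) (ne_of_lt hθt) ?_ ?_ ?_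
        · rcases htT.1 with h | h
          · exact Or.inl h
          · exact Or.inr (Or.inl (Finset.mem_singleton.mp h))
        · intro v hv
          constructor
          · intro hvθ
            exact T.le_max' v (by
              rw [hT, Finset.mem_filter, Finset.mem_union]
              exact ⟨Or.inl hv, hvθ⟩)
          · intro hθv; exact le_of_lt (hθt.trans hθv)
        · nlinarith [hsign, hθt]

end DPAux
namespace DPAux
variable {P : Type*} [Fintype P]

lemma cS_add (c d : P → ℝ) (S : Set P) : cS (c + d) S = cS c S + cS d S := by
  unfold cS
  rw [← Finset.sum_add_distrib]
  refine Finset.sum_congr rfl fun a _ => ?_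
  by_cases h : a ∈ S <;> simp [h]

lemma phi_add (c d f : P → ℝ) : phi (c + d) f = phi c f + phi d f := by
  unfold phi
  rw [← Finset.sum_add_distrib]
  refine Finset.sum_congr rfl fun a _ => by simp; ring

/-- If `c` strictly separates `F` from all other up-sets, then `1_F` is the unique
maximizer of `phi c` on the order polytope. -/
lemma unique_max {lep : P → P → Prop} {F : Set P} {c : P → ℝ}
    (hF : IsUpSet lep F)
    (hstrict : ∀ F', IsUpSet lep F' → F' ≠ F → cS c F' < cS c F) :
    ∀ f ∈ orderPoly P lep, phi c f = cS c F → f = F.indicator (fun _ => (1:ℝ)) := by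
  classical
  obtain ⟨η, hη, hgap⟩ : ∃ η > 0, ∀ F', IsUpSet lep F' → F' ≠ F → cS c F' + η ≤ cS c F := by
    set D := (Finset.univ : Finset (Set P)).filter (fun F' => IsUpSet lep F' ∧ F' ≠ F) with hD
    rcases D.eq_empty_or_nonempty with hDe | hDne
    · refine ⟨1, one_pos, fun F' hup hne => absurd ?_ (by simp [hDe] : F' ∉ D)⟩
      rw [hD, Finset.mem_filter]
      exact ⟨Finset.mem_univ _, hup, hne⟩
    · obtain ⟨m, hmD, hmin⟩ := Finset.exists_min_image D (fun F' => cS c F - cS c F') hDne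
      rw [hD, Finset.mem_filter] at hmD
      refine ⟨cS c F - cS c m, by linarith [hstrict m hmD.2.1 hmD.2.2], fun F' hup hne => ?_⟩
      have hF'D : F' ∈ D := by rw [hD, Finset.mem_filter]; exact ⟨Finset.mem_univ _, hup, hne⟩
      have := hmin F' hF'D
      linarith
  intro f hf hphi
  funext a
  set d : P → ℝ := fun b => if b = a then η else 0 with hd
  have hcSd : ∀ S : Set P, cS d S = if a ∈ S then η else 0 := by
    intro S
    unfold cS
    rw [Finset.sum_eq_single a]
    · by_cases h : a ∈ S <;> simp [hd, h]
    · intro b _ hb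
      by_cases h : b ∈ S <;> simp [hd, h, hb]
    · intro h; exact absurd (Finset.mem_univ a) h
  have hphid : phi d f = η * f a := by
    unfold phi
    rw [Finset.sum_eq_single a]
    · simp [hd]
    · intro b _ hb; simp [hd, hb]
    · intro h; exact absurd (Finset.mem_univ a) h
  have hup_le : ∀ F', IsUpSet lep F' → cS (c + d) F' ≤ cS (c + d) F := by
    intro F' hup
    rw [cS_add, cS_add, hcSd, hcSd]
    by_cases hne : F' = F
    · subst hne; exact le_rfl
    · have := hgap F' hup hne
      by_cases h1 : a ∈ F' <;> by_cases h2 : a ∈ F <;> simp [h1, h2] <;> linarith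
  have hup_le' : ∀ F', IsUpSet lep F' → cS (c + (-d)) F' ≤ cS (c + (-d)) F := by
    intro F' hup
    rw [cS_add, cS_add, cS_neg, cS_neg, hcSd, hcSd]
    by_cases hne : F' = F
    · subst hne; exact le_rfl
    · have := hgap F' hup hne
      by_cases h1 : a ∈ F' <;> by_cases h2 : a ∈ F <;> simp [h1, h2] <;> linarith
  have h1 := phi_le hup_le f hf
  have h2 := phi_le hup_le' f hf
  rw [phi_add, cS_add, hcSd, hphid, hphi] at h1
  rw [phi_add, phi_neg, cS_add, cS_neg, hcSd, hphid, hphi] at h2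
  by_cases hmem : a ∈ F
  · simp only [hmem, if_true] at h1 h2
    have hle : f a ≤ 1 := by
      have := mul_le_mul_iff_right₀ hη |>.mp (by linarith : η * f a ≤ η * 1)
      linarith [this]
    have hge : 1 ≤ f a := by
      have : η * 1 ≤ η * f a := by linarith
      exact (mul_le_mul_iff_right₀ hη).mp this
    simp [hmem]
    linarith
  · simp only [hmem, if_false] at h1 h2
    have hle : f a ≤ 0 := by
      have : η * f a ≤ η * 0 := by linarith
      exact (mul_le_mul_iff_right₀ hη).mp this
    have hge : 0 ≤ f a := (hf.1 a).1
    simp [hmem]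
    linarith

/-- existence of a minimal element below a given element -/
lemma exists_min_le {le : P → P → Prop}
    (hrefl : ∀ a, le a a) (htrans : ∀ {a b c}, le a b → le b c → le a c)
    (hanti : ∀ {a b}, le a b → le b a → a = b)
    {S : Set P} {a : P} (ha : a ∈ S) : ∃ m ∈ minSet le S, le m a := by
  classical
  suffices H : ∀ k : ℕ, ∀ a ∈ S,
      (Finset.univ.filter (fun b => b ∈ S ∧ le b a)).card ≤ k →
      ∃ m ∈ minSet le S, le m a by
    exact H (Fintype.card P) a ha (le_trans (Finset.card_filter_le _ _) (by simp))
  intro k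
  induction k with
  | zero =>
    intro a ha hcard
    exfalso
    have : a ∈ Finset.univ.filter (fun b => b ∈ S ∧ le b a) := by
      rw [Finset.mem_filter]; exact ⟨Finset.mem_univ _, ha, hrefl a⟩
    have := Finset.card_pos.mpr ⟨a, this⟩
    omega
  | succ k IH =>
    intro a ha hcard
    by_cases hmin : ∀ b ∈ S, le b a → b = a
    · exact ⟨a, ⟨ha, hmin⟩, hrefl a⟩
    · push_neg at hmin
      obtain ⟨b, hbS, hba, hbne⟩ := hmin
      have hsub : Finset.univ.filter (fun x => x ∈ S ∧ le x b) ⊆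
          (Finset.univ.filter (fun x => x ∈ S ∧ le x a)).erase a := by
        intro x hx
        rw [Finset.mem_filter] at hx
        rw [Finset.mem_erase, Finset.mem_filter]
        refine ⟨?_, Finset.mem_univ _, hx.2.1, htrans hx.2.2 hba⟩
        intro hxa
        subst hxa
        exact hbne (hanti hba hx.2.2)
      have hmema : a ∈ Finset.univ.filter (fun x => x ∈ S ∧ le x a) := by
        rw [Finset.mem_filter]; exact ⟨Finset.mem_univ _, ha, hrefl a⟩
      have h1 := Finset.card_le_card hsub
      have h2 := Finset.card_erase_of_mem hmema
      obtain ⟨m, hm, hmb⟩ := IH b hbS (by omega)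
      exact ⟨m, hm, htrans hmb hba⟩

lemma maxSet_eq_minSet_flip (le : P → P → Prop) (S : Set P) :
    maxSet le S = minSet (fun a b => le b a) S := rfl

lemma exists_max_le {le : P → P → Prop}
    (hrefl : ∀ a, le a a) (htrans : ∀ {a b c}, le a b → le b c → le a c)
    (hanti : ∀ {a b}, le a b → le b a → a = b)
    {S : Set P} {a : P} (ha : a ∈ S) : ∃ m ∈ maxSet le S, le a m := by
  have := exists_min_le (le := fun a b => le b a) hrefl
    (fun {a b c} h1 h2 => htrans h2 h1) (fun {a b} h1 h2 => hanti h2 h1) ha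
  rw [maxSet_eq_minSet_flip]
  exact this

end DPAux
namespace DPAux
variable {P : Type*} [Fintype P]

lemma geom3 (e : ℕ) : ∑ i ∈ Finset.range e, (3:ℝ)^i < 3^e := by
  induction e with
  | zero => simp
  | succ e IH =>
    rw [Finset.sum_range_succ, pow_succ]
    nlinarith [pow_pos (by norm_num : (0:ℝ) < 3) e]

/-- a huge constant-value element dominates bounded noise -/
lemma sum_pos_of_big (S : Finset P) (c : P → ℝ) (K M : ℝ) (hM : 0 ≤ M)
    (hval : ∀ b ∈ S, c b = K ∨ |c b| ≤ M)
    (hex : ∃ b ∈ S, c b = K)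
    (hKbig : (S.card : ℝ) * M < K) :
    0 < ∑ b ∈ S, c b := by
  classical
  have hle : ∀ b ∈ S, (if c b = K then K else -M) ≤ c b := by
    intro b hb
    by_cases h : c b = K
    · simp [h]
    · simp only [h, if_false]
      rcases hval b hb with h' | h'
      · exact absurd h' h
      · linarith [neg_abs_le (c b), h']
  have hsum := Finset.sum_le_sum hle
  rw [Finset.sum_ite] at hsum
  rw [Finset.sum_const, Finset.sum_const] at hsum
  set T := S.filter (fun b => c b = K) with hT
  set T' := S.filter (fun b => ¬ c b = K) with hT'
  have hTcard : 1 ≤ T.card := by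
    obtain ⟨b, hb, hbK⟩ := hex
    exact Finset.card_pos.mpr ⟨b, by rw [hT, Finset.mem_filter]; exact ⟨hb, hbK⟩⟩
  have hT'card : T'.card ≤ S.card := Finset.card_le_card (Finset.filter_subset _ _)
  have hKpos : 0 < K := lt_of_le_of_lt (mul_nonneg (Nat.cast_nonneg _) hM) hKbig
  have hT1 : (1:ℝ) ≤ (T.card : ℝ) := by exact_mod_cast hTcard
  have h1 : (K : ℝ) ≤ (T.card : ℝ) * K := by nlinarith
  have h2 : -((S.card : ℝ) * M) ≤ -((T'.card:ℝ) * M) := by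
    have : (T'.card : ℝ) ≤ (S.card : ℝ) := Nat.cast_le.mpr hT'card
    nlinarith
  have : (T.card : ℝ) • K + (T'.card : ℝ) • (-M) = (T.card : ℝ) * K - (T'.card:ℝ) * M := by
    simp [smul_eq_mul]; ring
  rw [nsmul_eq_mul, nsmul_eq_mul] at hsum
  nlinarith

/-- a strictly largest geometric term dominates smaller distinct geometric terms -/
lemma sum_pos_of_geom (S : Finset P) (c : P → ℝ) (w : P → ℕ) (m : P) (hm : m ∈ S)
    (hinj : ∀ x ∈ S, ∀ y ∈ S, w x = w y → x = y)
    (hcm : c m = 3 ^ w m)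
    (hother : ∀ b ∈ S, b ≠ m → |c b| ≤ 3 ^ w b ∧ w b < w m) :
    0 < ∑ b ∈ S, c b := by
  classical
  rw [← Finset.add_sum_erase S c hm]
  have h1 : ∑ b ∈ S.erase m, c b ≥ -∑ b ∈ S.erase m, (3:ℝ) ^ w b := by
    rw [← Finset.sum_neg_distrib]
    refine Finset.sum_le_sum fun b hb => ?_
    have hbS := Finset.mem_of_mem_erase hb
    have hbm := Finset.ne_of_mem_erase hb
    linarith [neg_abs_le (c b), (hother b hbS hbm).1]
  have h2 : ∑ b ∈ S.erase m, (3:ℝ) ^ w b = ∑ i ∈ (S.erase m).image w, (3:ℝ) ^ i := by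
    rw [Finset.sum_image]
    intro x hx y hy hxy
    exact hinj x (Finset.mem_of_mem_erase hx) y (Finset.mem_of_mem_erase hy) hxy
  have h3 : ∑ i ∈ (S.erase m).image w, (3:ℝ) ^ i ≤ ∑ i ∈ Finset.range (w m), (3:ℝ)^i := by
    refine Finset.sum_le_sum_of_subset_of_nonneg ?_ (fun i _ _ => by positivity)
    intro i hi
    obtain ⟨b, hb, rfl⟩ := Finset.mem_image.mp hi
    exact Finset.mem_range.mpr
      (hother b (Finset.mem_of_mem_erase hb) (Finset.ne_of_mem_erase hb)).2
  have h4 := geom3 (w m)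
  rw [hcm]
  linarith

end DPAux
namespace DPAux
variable {P : Type*} [Fintype P]

lemma exists_good_c {lep lem : P → P → Prop}
    (hp : IsPartialOrder P lep) (hm : IsPartialOrder P lem)
    (hcomp : Compatible P lep lem)
    {Fp Fm : Set P} (hFp : IsUpSet lep Fp) (hFm : IsUpSet lem Fm)
    (hmin : minSet lep Fp ∩ minSet lem Fm = ∅)
    (hmax : maxSet lep Fpᶜ ∩ maxSet lem Fmᶜ = ∅) :
    ∃ c : P → ℝ,
      (∀ F', IsUpSet lep F' → F' ≠ Fp → cS c F' < cS c Fp) ∧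
      (∀ G', IsUpSet lem G' → G' ≠ Fm → cS c Fm < cS c G') := by
  classical
  obtain ⟨l, hl, hlp, hlm⟩ := hcomp
  haveI := hl
  set n := Fintype.card P with hn
  set pos : P → ℕ := fun a => (Finset.univ.filter (fun b => l b a ∧ b ≠ a)).card with hpos
  have pos_lt : ∀ a b : P, l a b → a ≠ b → pos a < pos b := by
    intro a b hab hne
    refine Finset.card_lt_card (Finset.ssubset_iff_of_subset ?_ |>.mpr ⟨a, ?_, ?_⟩)
    · intro x hx
      rw [Finset.mem_filter] at hx ⊢
      refine ⟨Finset.mem_univ _, trans_of l hx.2.1 hab, ?_⟩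
      intro hxb; subst hxb
      exact hne (antisymm_of l hab hx.2.1)
    · rw [Finset.mem_filter]; exact ⟨Finset.mem_univ _, hab, hne⟩
    · simp
  have pos_inj : ∀ a b : P, pos a = pos b → a = b := by
    intro a b h
    by_contra hne
    rcases total_of l a b with hab | hba
    · exact absurd h (Nat.ne_of_lt (pos_lt a b hab hne))
    · exact absurd h.symm (Nat.ne_of_lt (pos_lt b a hba (Ne.symm hne)))
  have pos_lt_n : ∀ a, pos a < n := by
    intro a
    have h1 : pos a ≤ (Finset.univ.erase a).card := by
      refine Finset.card_le_card ?_
      intro x hx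
      rw [Finset.mem_filter] at hx
      exact Finset.mem_erase.mpr ⟨hx.2.2, Finset.mem_univ _⟩
    have h2 := Finset.card_erase_of_mem (Finset.mem_univ a)
    have h3 : 0 < (Finset.univ : Finset P).card := Finset.card_pos.mpr ⟨a, Finset.mem_univ a⟩
    rw [Finset.card_univ] at h2 h3
    omega
  set K : ℝ := ((n:ℝ)+1) * 3^n with hK
  set sp : P → ℝ := fun a => if a ∈ minSet lep Fp then 1 else -1 with hsp
  set sm : P → ℝ := fun a => if a ∈ maxSet lep Fpᶜ then -1 else 1 with hsmm
  set c : P → ℝ := fun a =>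
    if a ∈ Fp then (if a ∈ Fm then sp a * 3^(n-1-pos a) else K)
    else (if a ∈ Fm then -K else sm a * 3^(pos a)) with hc
  have habs_sp : ∀ a, |sp a| = 1 := by
    intro a; simp only [hsp]; split <;> simp
  have habs_sm : ∀ a, |sm a| = 1 := by
    intro a; simp only [hsmm]; split <;> simp
  have hM : ∀ a, ((a ∈ Fp ∧ a ∈ Fm) ∨ (a ∉ Fp ∧ a ∉ Fm)) → |c a| ≤ 3^(n-1) := by
    intro a ha
    have hpa := pos_lt_n a
    rcases ha with ⟨h1, h2⟩ | ⟨h1, h2⟩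
    · simp only [hc, h1, h2, if_true]
      rw [abs_mul, habs_sp, one_mul, abs_of_pos (by positivity)]
      exact pow_le_pow_right₀ (by norm_num) (by omega)
    · simp only [hc, h1, h2, if_false]
      rw [abs_mul, habs_sm, one_mul, abs_of_pos (by positivity)]
      exact pow_le_pow_right₀ (by norm_num) (by omega)
  have hcard_le : ∀ S : Finset P, (S.card : ℝ) * (3:ℝ)^(n-1) < K := by
    intro S
    have h1 : (S.card : ℝ) ≤ (n : ℝ) := by
      exact_mod_cast le_trans (Finset.card_le_univ S) (le_of_eq Finset.card_univ)
    have h2 : (3:ℝ)^(n-1) ≤ 3^n := pow_le_pow_right₀ (by norm_num) (by omega)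
    have h3 : (0:ℝ) < 3^n := by positivity
    have h4 : (0:ℝ) < 3^(n-1) := by positivity
    rw [hK]
    nlinarith
  have hcS : ∀ S : Set P, cS c S = ∑ a ∈ Finset.univ.filter (· ∈ S), c a :=
    fun S => cS_eq_sum_filter c S
  have hmemSB : ∀ (B : Set P) (x : P), x ∈ Finset.univ.filter (· ∈ B) ↔ x ∈ B := by
    intro B x; rw [Finset.mem_filter]; simp
  -- D₊ : nonempty relative down-sets of Fp have positive sum
  have DSp : ∀ B : Set P, B ⊆ Fp → (∀ x ∈ B, ∀ b ∈ Fp, lep b x → b ∈ B) →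
      B.Nonempty → 0 < cS c B := by
    intro B hBsub hBdown hBne
    rw [hcS]
    set SB := Finset.univ.filter (· ∈ B) with hSB
    have hSBne : SB.Nonempty := ⟨hBne.choose, (hmemSB B _).mpr hBne.choose_spec⟩
    by_cases hmix : ∃ x ∈ B, x ∉ Fm
    · obtain ⟨x, hxB, hxFm⟩ := hmix
      refine sum_pos_of_big SB c K (3^(n-1)) (by positivity) ?_
        ⟨x, (hmemSB B x).mpr hxB, ?_⟩ (hcard_le SB)
      · intro b hb
        have hbB := (hmemSB B b).mp hb
        have hbFp := hBsub hbB
        by_cases hbFm : b ∈ Fm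
        · exact Or.inr (hM b (Or.inl ⟨hbFp, hbFm⟩))
        · left; simp only [hc, hbFp, hbFm, if_true, if_false]
      · simp only [hc, hBsub hxB, hxFm, if_true, if_false]
    · push_neg at hmix
      obtain ⟨m, hmSB, hmmin⟩ := Finset.exists_min_image SB pos hSBne
      have hmB := (hmemSB B m).mp hmSB
      have hmFp : m ∈ Fp := hBsub hmB
      have hmFm : m ∈ Fm := hmix m hmB
      have hmMin : m ∈ minSet lep Fp := by
        refine ⟨hmFp, fun b hb hba => ?_⟩
        have hbB : b ∈ B := hBdown m hmB b hb hba
        by_contra hne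
        have h1 := pos_lt b m (hlp _ _ hba) hne
        have h2 := hmmin b ((hmemSB B b).mpr hbB)
        omega
      refine sum_pos_of_geom SB c (fun b => n - 1 - pos b) m hmSB ?_ ?_ ?_
      · intro x _ y _ hxy
        change n - 1 - pos x = n - 1 - pos y at hxy
        have := pos_lt_n x; have := pos_lt_n y
        exact pos_inj x y (by omega)
      · simp only [hc, hmFp, hmFm, if_true, hsp, hmMin, one_mul]
      · intro b hbSB hbm
        have hbB := (hmemSB B b).mp hbSB
        have h1 := hBsub hbB
        have h2 := hmix b hbB
        constructor
        · simp only [hc, h1, h2, if_true]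
          rw [abs_mul, habs_sp, one_mul, abs_of_pos (by positivity)]
        · show n - 1 - pos b < n - 1 - pos m
          have hne : pos b ≠ pos m := fun h => hbm (pos_inj b m h)
          have h3 := hmmin b hbSB
          have h4 := pos_lt_n b
          have h5 := pos_lt_n m
          omega
  -- D₋ : nonempty relative down-sets of Fm have negative sum
  have DSm : ∀ B : Set P, B ⊆ Fm → (∀ x ∈ B, ∀ b ∈ Fm, lem b x → b ∈ B) →
      B.Nonempty → cS c B < 0 := by
    intro B hBsub hBdown hBne
    rw [hcS]
    set SB := Finset.univ.filter (· ∈ B) with hSB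
    have hSBne : SB.Nonempty := ⟨hBne.choose, (hmemSB B _).mpr hBne.choose_spec⟩
    suffices h : 0 < ∑ b ∈ SB, -(c b) by
      rw [Finset.sum_neg_distrib] at h; linarith
    by_cases hmix : ∃ x ∈ B, x ∉ Fp
    · obtain ⟨x, hxB, hxFp⟩ := hmix
      refine sum_pos_of_big SB (fun b => -(c b)) K (3^(n-1)) (by positivity) ?_
        ⟨x, (hmemSB B x).mpr hxB, ?_⟩ (hcard_le SB)
      · intro b hb
        have hbB := (hmemSB B b).mp hb
        have hbFm := hBsub hbB
        by_cases hbFp : b ∈ Fp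
        · right; rw [abs_neg]; exact hM b (Or.inl ⟨hbFp, hbFm⟩)
        · left; simp only [hc, hbFp, hbFm, if_true, if_false]; ring
      · simp only [hc, hxFp, hBsub hxB, if_true, if_false]; ring
    · push_neg at hmix
      obtain ⟨m, hmSB, hmmin⟩ := Finset.exists_min_image SB pos hSBne
      have hmB := (hmemSB B m).mp hmSB
      have hmFm : m ∈ Fm := hBsub hmB
      have hmFp : m ∈ Fp := hmix m hmB
      have hmMin : m ∈ minSet lem Fm := by
        refine ⟨hmFm, fun b hb hba => ?_⟩
        have hbB : b ∈ B := hBdown m hmB b hb hba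
        by_contra hne
        have h1 := pos_lt b m (hlm _ _ hba) hne
        have h2 := hmmin b ((hmemSB B b).mpr hbB)
        omega
      have hmNot : m ∉ minSet lep Fp := by
        intro h
        have : m ∈ minSet lep Fp ∩ minSet lem Fm := ⟨h, hmMin⟩
        rw [hmin] at this
        exact this
      refine sum_pos_of_geom SB (fun b => -(c b)) (fun b => n - 1 - pos b) m hmSB ?_ ?_ ?_
      · intro x _ y _ hxy
        change n - 1 - pos x = n - 1 - pos y at hxy
        have := pos_lt_n x; have := pos_lt_n y
        exact pos_inj x y (by omega)
      · simp only [hc, hmFp, hmFm, if_true, hsp, hmNot, if_false]; ring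
      · intro b hbSB hbm
        have hbB := (hmemSB B b).mp hbSB
        have h1 := hmix b hbB
        have h2 := hBsub hbB
        constructor
        · rw [abs_neg]
          simp only [hc, h1, h2, if_true]
          rw [abs_mul, habs_sp, one_mul, abs_of_pos (by positivity)]
        · show n - 1 - pos b < n - 1 - pos m
          have hne : pos b ≠ pos m := fun h => hbm (pos_inj b m h)
          have h3 := hmmin b hbSB
          have h4 := pos_lt_n b
          have h5 := pos_lt_n m
          omega
  -- U₊ : nonempty relative up-sets of Fpᶜ have negative sum
  have USp : ∀ A : Set P, A ⊆ Fpᶜ → (∀ x ∈ A, ∀ b ∈ Fpᶜ, lep x b → b ∈ A) →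
      A.Nonempty → cS c A < 0 := by
    intro A hAsub hAup hAne
    rw [hcS]
    set SA := Finset.univ.filter (· ∈ A) with hSA
    have hSAne : SA.Nonempty := ⟨hAne.choose, (hmemSB A _).mpr hAne.choose_spec⟩
    suffices h : 0 < ∑ b ∈ SA, -(c b) by
      rw [Finset.sum_neg_distrib] at h; linarith
    by_cases hmix : ∃ x ∈ A, x ∈ Fm
    · obtain ⟨x, hxA, hxFm⟩ := hmix
      have hxFp : x ∉ Fp := hAsub hxA
      refine sum_pos_of_big SA (fun b => -(c b)) K (3^(n-1)) (by positivity) ?_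
        ⟨x, (hmemSB A x).mpr hxA, ?_⟩ (hcard_le SA)
      · intro b hb
        have hbA := (hmemSB A b).mp hb
        have hbFp : b ∉ Fp := hAsub hbA
        by_cases hbFm : b ∈ Fm
        · left; simp only [hc, hbFp, hbFm, if_true, if_false]; ring
        · right; rw [abs_neg]; exact hM b (Or.inr ⟨hbFp, hbFm⟩)
      · simp only [hc, hxFp, hxFm, if_true, if_false]; ring
    · push_neg at hmix
      obtain ⟨m, hmSA, hmmax⟩ := Finset.exists_max_image SA pos hSAne
      have hmA := (hmemSB A m).mp hmSA
      have hmFp : m ∉ Fp := hAsub hmA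
      have hmFm : m ∉ Fm := hmix m hmA
      have hmMax : m ∈ maxSet lep Fpᶜ := by
        refine ⟨hAsub hmA, fun b hb hba => ?_⟩
        have hbA : b ∈ A := hAup m hmA b hb hba
        by_contra hne
        have h1 := pos_lt m b (hlp _ _ hba) (Ne.symm hne)
        have h2 := hmmax b ((hmemSB A b).mpr hbA)
        omega
      refine sum_pos_of_geom SA (fun b => -(c b)) pos m hmSA ?_ ?_ ?_
      · intro x _ y _ hxy
        exact pos_inj x y hxy
      · simp only [hc, hmFp, hmFm, if_false, hsmm, hmMax, if_true]; ring
      · intro b hbSA hbm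
        have hbA := (hmemSB A b).mp hbSA
        have h1 : b ∉ Fp := hAsub hbA
        have h2 := hmix b hbA
        constructor
        · rw [abs_neg]
          simp only [hc, h1, h2, if_false]
          rw [abs_mul, habs_sm, one_mul, abs_of_pos (by positivity)]
        · have hne : pos b ≠ pos m := fun h => hbm (pos_inj b m h)
          have h3 := hmmax b hbSA
          omega
  -- U₋ : nonempty relative up-sets of Fmᶜ have positive sum
  have USm : ∀ A : Set P, A ⊆ Fmᶜ → (∀ x ∈ A, ∀ b ∈ Fmᶜ, lem x b → b ∈ A) →
      A.Nonempty → 0 < cS c A := by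
    intro A hAsub hAup hAne
    rw [hcS]
    set SA := Finset.univ.filter (· ∈ A) with hSA
    have hSAne : SA.Nonempty := ⟨hAne.choose, (hmemSB A _).mpr hAne.choose_spec⟩
    by_cases hmix : ∃ x ∈ A, x ∈ Fp
    · obtain ⟨x, hxA, hxFp⟩ := hmix
      have hxFm : x ∉ Fm := hAsub hxA
      refine sum_pos_of_big SA c K (3^(n-1)) (by positivity) ?_
        ⟨x, (hmemSB A x).mpr hxA, ?_⟩ (hcard_le SA)
      · intro b hb
        have hbA := (hmemSB A b).mp hb
        have hbFm : b ∉ Fm := hAsub hbA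
        by_cases hbFp : b ∈ Fp
        · left; simp only [hc, hbFp, hbFm, if_true, if_false]
        · exact Or.inr (hM b (Or.inr ⟨hbFp, hbFm⟩))
      · simp only [hc, hxFp, hxFm, if_true, if_false]
    · push_neg at hmix
      obtain ⟨m, hmSA, hmmax⟩ := Finset.exists_max_image SA pos hSAne
      have hmA := (hmemSB A m).mp hmSA
      have hmFm : m ∉ Fm := hAsub hmA
      have hmFp : m ∉ Fp := hmix m hmA
      have hmMax : m ∈ maxSet lem Fmᶜ := by
        refine ⟨hAsub hmA, fun b hb hba => ?_⟩
        have hbA : b ∈ A := hAup m hmA b hb hba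
        by_contra hne
        have h1 := pos_lt m b (hlm _ _ hba) (Ne.symm hne)
        have h2 := hmmax b ((hmemSB A b).mpr hbA)
        omega
      have hmNot : m ∉ maxSet lep Fpᶜ := by
        intro h
        have : m ∈ maxSet lep Fpᶜ ∩ maxSet lem Fmᶜ := ⟨h, hmMax⟩
        rw [hmax] at this
        exact this
      refine sum_pos_of_geom SA c pos m hmSA ?_ ?_ ?_
      · intro x _ y _ hxy
        exact pos_inj x y hxy
      · simp only [hc, hmFp, hmFm, if_false, hsmm, hmNot, one_mul]
      · intro b hbSA hbm
        have hbA := (hmemSB A b).mp hbSA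
        have h1 : b ∉ Fp := hmix b hbA
        have h2 : b ∉ Fm := hAsub hbA
        constructor
        · simp only [hc, h1, h2, if_false]
          rw [abs_mul, habs_sm, one_mul, abs_of_pos (by positivity)]
        · have hne : pos b ≠ pos m := fun h => hbm (pos_inj b m h)
          have h3 := hmmax b hbSA
          omega
  have hcS_empty : cS c ∅ = 0 := by simp [cS]
  refine ⟨c, ?_, ?_⟩
  · intro F' hup hne
    have hdiff := cS_sub_cS c F' Fp
    have hAfact : (F' \ Fp) = ∅ ∨ cS c (F' \ Fp) < 0 := by
      rcases (F' \ Fp).eq_empty_or_nonempty with he | hne'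
      · exact Or.inl he
      · refine Or.inr (USp _ (fun x hx => hx.2) ?_ hne')
        intro x hx b hb hxb
        exact ⟨hup x hx.1 b hxb, hb⟩
    have hBfact : (Fp \ F') = ∅ ∨ 0 < cS c (Fp \ F') := by
      rcases (Fp \ F').eq_empty_or_nonempty with he | hne'
      · exact Or.inl he
      · refine Or.inr (DSp _ (fun x hx => hx.1) ?_ hne')
        intro x hx b hb hba
        exact ⟨hb, fun hbF' => hx.2 (hup b hbF' x hba)⟩
    rcases hAfact with hA | hA <;> rcases hBfact with hB | hB
    · exact absurd (le_antisymm (Set.diff_eq_empty.mp hA) (Set.diff_eq_empty.mp hB)) hne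
    · rw [hA, hcS_empty] at hdiff; linarith
    · rw [hB, hcS_empty] at hdiff; linarith
    · linarith
  · intro G' hup hne
    have hdiff := cS_sub_cS c G' Fm
    have hAfact : (G' \ Fm) = ∅ ∨ 0 < cS c (G' \ Fm) := by
      rcases (G' \ Fm).eq_empty_or_nonempty with he | hne'
      · exact Or.inl he
      · refine Or.inr (USm _ (fun x hx => hx.2) ?_ hne')
        intro x hx b hb hxb
        exact ⟨hup x hx.1 b hxb, hb⟩
    have hBfact : (Fm \ G') = ∅ ∨ cS c (Fm \ G') < 0 := by
      rcases (Fm \ G').eq_empty_or_nonempty with he | hne'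
      · exact Or.inl he
      · refine Or.inr (DSm _ (fun x hx => hx.1) ?_ hne')
        intro x hx b hb hba
        exact ⟨hb, fun hbG' => hx.2 (hup b hbG' x hba)⟩
    rcases hAfact with hA | hA <;> rcases hBfact with hB | hB
    · exact absurd (le_antisymm (Set.diff_eq_empty.mp hA) (Set.diff_eq_empty.mp hB)) hne
    · rw [hA, hcS_empty] at hdiff; linarith
    · rw [hB, hcS_empty] at hdiff; linarith
    · linarith

end DPAux
namespace DPAux
variable {P : Type*} [Fintype P]

open Classical in
lemma perturb_mem_min {lep : P → P → Prop} {Fp : Set P} (hFp : IsUpSet lep Fp)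
    {x : P} (hx : x ∈ minSet lep Fp) :
    (fun a => if a = x then (1/2 : ℝ) else Fp.indicator (fun _ => (1:ℝ)) a) ∈
      orderPoly P lep := by
  classical
  constructor
  · intro a
    by_cases ha : a = x
    · simp [ha]
      all_goals norm_num
    · simp only [ha, if_false]
      by_cases h : a ∈ Fp <;> simp [h]
  · intro a b hab
    by_cases ha : a = x <;> by_cases hb : b = x
    · simp [ha, hb]
    · rw [ha] at hab
      have hbFp : b ∈ Fp := hFp x hx.1 b hab
      simp [ha, hb, hbFp]
      all_goals norm_num
    · rw [hb] at hab
      have haFp : a ∉ Fp := fun h => ha (hx.2 a h hab)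
      simp [ha, hb, haFp]
      all_goals norm_num
    · simp only [ha, hb, if_false]
      by_cases h : a ∈ Fp
      · have : b ∈ Fp := hFp a h b hab
        simp [h, this]
      · by_cases h' : b ∈ Fp <;> simp [h, h']
open Classical in
lemma perturb_mem_max {lep : P → P → Prop} {Fp : Set P} (hFp : IsUpSet lep Fp)
    {x : P} (hx : x ∈ maxSet lep Fpᶜ) :
    (fun a => if a = x then (1/2 : ℝ) else Fp.indicator (fun _ => (1:ℝ)) a) ∈
      orderPoly P lep := by
  classical
  constructor
  · intro a
    by_cases ha : a = x
    · simp [ha]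
      all_goals norm_num
    · simp only [ha, if_false]
      by_cases h : a ∈ Fp <;> simp [h]
  · intro a b hab
    by_cases ha : a = x <;> by_cases hb : b = x
    · simp [ha, hb]
    · rw [ha] at hab
      have hbFp : b ∈ Fp := by
        by_contra h
        exact hb (hx.2 b h hab)
      simp [ha, hb, hbFp]
      all_goals norm_num
    · rw [hb] at hab
      have haFp : a ∉ Fp := by
        intro h
        exact hx.1 (hFp a h x hab)
      simp [ha, hb, haFp]
      all_goals norm_num
    · simp only [ha, hb, if_false]
      by_cases h : a ∈ Fp
      · have : b ∈ Fp := hFp a h b hab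
        simp [h, this]
      · by_cases h' : b ∈ Fp <;> simp [h, h']

open Classical in
lemma not_extreme_of_perturb {lep lem : P → P → Prop}
    {Fp Fm : Set P} (hFp : IsUpSet lep Fp) (hFm : IsUpSet lem Fm)
    (x : P) (hx : x ∈ Fp ↔ x ∈ Fm)
    (hf : (fun a => if a = x then (1/2 : ℝ) else Fp.indicator (fun _ => (1:ℝ)) a) ∈
      orderPoly P lep)
    (hg : (fun a => if a = x then (1/2 : ℝ) else Fm.indicator (fun _ => (1:ℝ)) a) ∈
      orderPoly P lem) :
    (Fp.indicator (fun _ => (1 : ℝ)) - Fm.indicator (fun _ => (1 : ℝ))) ∉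
        Set.extremePoints ℝ (orderPoly P lep - orderPoly P lem) := by
  classical
  intro hext
  rw [mem_extremePoints] at hext
  set f' : P → ℝ := fun a => if a = x then (1/2 : ℝ) else Fp.indicator (fun _ => (1:ℝ)) a
    with hf'
  set g' : P → ℝ := fun a => if a = x then (1/2 : ℝ) else Fm.indicator (fun _ => (1:ℝ)) a
    with hg'
  set u₁ : P → ℝ := f' - Fm.indicator (fun _ => (1:ℝ)) with hu₁d
  set u₂ : P → ℝ := Fp.indicator (fun _ => (1:ℝ)) - g' with hu₂d
  have hu₁ : u₁ ∈ orderPoly P lep - orderPoly P lem :=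
    Set.sub_mem_sub hf (indicator_mem_orderPoly hFm)
  have hu₂ : u₂ ∈ orderPoly P lep - orderPoly P lem :=
    Set.sub_mem_sub (indicator_mem_orderPoly hFp) hg
  have hseg : (Fp.indicator (fun _ => (1 : ℝ)) - Fm.indicator (fun _ => (1 : ℝ))) ∈
      openSegment ℝ u₁ u₂ := by
    refine ⟨1/2, 1/2, by norm_num, by norm_num, by norm_num, ?_⟩
    funext a
    simp only [hu₁d, hu₂d, hf', hg', Pi.add_apply, Pi.smul_apply, Pi.sub_apply, smul_eq_mul]
    by_cases ha : a = x
    · subst ha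
      by_cases hmem : a ∈ Fp
      · have hmem' : a ∈ Fm := hx.mp hmem
        simp [hmem, hmem']
        all_goals norm_num
      · have hmem' : a ∉ Fm := fun h => hmem (hx.mpr h)
        simp [hmem, hmem']
        all_goals norm_num
    · simp only [ha, if_false]
      ring
  have heq := (hext.2 u₁ hu₁ u₂ hu₂ hseg).1
  have hx2 := congrFun heq x
  simp only [hu₁d, hf', Pi.sub_apply, if_pos rfl] at hx2
  by_cases hmem : x ∈ Fp
  · have hmem' : x ∈ Fm := hx.mp hmem
    simp [hmem, hmem'] at hx2
    norm_num at hx2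
  · have hmem' : x ∉ Fm := fun h => hmem (hx.mpr h)
    simp [hmem, hmem'] at hx2

end DPAux

open DPAux

/-- For a compatible double poset, `1_{F₊} − 1_{F₋}` is a vertex of the Minkowski
difference `O(P,⪯₊) − O(P,⪯₋)` iff `min(F₊) ∩ min(F₋) = ∅` and
`max(P∖F₊) ∩ max(P∖F₋) = ∅`. -/
theorem indicator_sub_indicator_extremePoint_iff
    (P : Type*) [Fintype P] (lep lem : P → P → Prop)
    (hp : IsPartialOrder P lep) (hm : IsPartialOrder P lem)
    (hcomp : Compatible P lep lem)
    (Fp Fm : Set P) (hFp : IsUpSet lep Fp) (hFm : IsUpSet lem Fm) :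
    (Fp.indicator (fun _ => (1 : ℝ)) - Fm.indicator (fun _ => (1 : ℝ))) ∈
        Set.extremePoints ℝ (orderPoly P lep - orderPoly P lem) ↔
      (minSet lep Fp ∩ minSet lem Fm = ∅ ∧
       maxSet lep Fpᶜ ∩ maxSet lem Fmᶜ = ∅) := by
  classical
  constructor
  · intro hv
    constructor
    · by_contra h
      obtain ⟨x, hx⟩ := Set.nonempty_iff_ne_empty.mpr h
      exact not_extreme_of_perturb hFp hFm x (iff_of_true hx.1.1 hx.2.1)
        (perturb_mem_min hFp hx.1) (perturb_mem_min hFm hx.2) hv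
    · by_contra h
      obtain ⟨x, hx⟩ := Set.nonempty_iff_ne_empty.mpr h
      exact not_extreme_of_perturb hFp hFm x (iff_of_false hx.1.1 hx.2.1)
        (perturb_mem_max hFp hx.1) (perturb_mem_max hFm hx.2) hv
  · rintro ⟨h1, h2⟩
    obtain ⟨c, hcp, hcm⟩ := exists_good_c hp hm hcomp hFp hFm h1 h2
    have hcple : ∀ F', IsUpSet lep F' → cS c F' ≤ cS c Fp := by
      intro F' h
      by_cases he : F' = Fp
      · subst he; exact le_rfl
      · exact (hcp F' h he).le
    have hcmle : ∀ G', IsUpSet lem G' → cS (-c) G' ≤ cS (-c) Fm := by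
      intro G' h
      rw [cS_neg, cS_neg]
      by_cases he : G' = Fm
      · subst he; exact le_rfl
      · linarith [hcm G' h he]
    have hcmstrict : ∀ G', IsUpSet lem G' → G' ≠ Fm → cS (-c) G' < cS (-c) Fm := by
      intro G' h he
      rw [cS_neg, cS_neg]
      linarith [hcm G' h he]
    rw [mem_extremePoints]
    refine ⟨Set.sub_mem_sub (indicator_mem_orderPoly hFp) (indicator_mem_orderPoly hFm), ?_⟩
    intro x₁ hx₁ x₂ hx₂ hseg
    obtain ⟨α, β, hα, hβ, hαβ, hcomb⟩ := hseg
    obtain ⟨f₁, hf₁, g₁, hg₁, hfg₁⟩ := Set.mem_sub.mp hx₁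
    obtain ⟨f₂, hf₂, g₂, hg₂, hfg₂⟩ := Set.mem_sub.mp hx₂
    set M : ℝ := cS c Fp - cS c Fm with hM
    have hbf₁ := phi_le hcple f₁ hf₁
    have hbf₂ := phi_le hcple f₂ hf₂
    have hbg₁ : cS c Fm ≤ phi c g₁ := by
      have := phi_le hcmle g₁ hg₁
      rw [phi_neg, cS_neg] at this
      linarith
    have hbg₂ : cS c Fm ≤ phi c g₂ := by
      have := phi_le hcmle g₂ hg₂
      rw [phi_neg, cS_neg] at this
      linarith
    have hx1le : phi c x₁ ≤ M := by
      rw [← hfg₁, phi_sub]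
      linarith
    have hx2le : phi c x₂ ≤ M := by
      rw [← hfg₂, phi_sub]
      linarith
    have hvM : phi c (Fp.indicator (fun _ => (1 : ℝ)) - Fm.indicator (fun _ => (1 : ℝ))) = M := by
      rw [phi_sub, phi_indicator, phi_indicator]
    have hsum : α * phi c x₁ + β * phi c x₂ = M := by
      rw [← phi_comb, hcomb, hvM]
    have hm3 : α * M + β * M = M := by rw [← add_mul, hαβ, one_mul]
    have hx1M : phi c x₁ = M := by
      by_contra h
      have hlt : phi c x₁ < M := lt_of_le_of_ne hx1le h
      have hm1 : α * phi c x₁ < α * M := by nlinarith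
      have hm2 : β * phi c x₂ ≤ β * M := by nlinarith
      linarith
    have hx2M : phi c x₂ = M := by
      by_contra h
      have hlt : phi c x₂ < M := lt_of_le_of_ne hx2le h
      have hm1 : β * phi c x₂ < β * M := by nlinarith
      have hm2 : α * phi c x₁ ≤ α * M := by nlinarith
      linarith
    have hx1split : phi c f₁ = cS c Fp ∧ phi c g₁ = cS c Fm := by
      rw [← hfg₁, phi_sub] at hx1M
      constructor <;> linarith
    have hx2split : phi c f₂ = cS c Fp ∧ phi c g₂ = cS c Fm := by
      rw [← hfg₂, phi_sub] at hx2M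
      constructor <;> linarith
    have hf₁eq := unique_max hFp hcp f₁ hf₁ hx1split.1
    have hf₂eq := unique_max hFp hcp f₂ hf₂ hx2split.1
    have hg₁eq := unique_max hFm hcmstrict g₁ hg₁ (by rw [phi_neg, cS_neg, hx1split.2])
    have hg₂eq := unique_max hFm hcmstrict g₂ hg₂ (by rw [phi_neg, cS_neg, hx2split.2])
    constructor
    · rw [← hfg₁, hf₁eq, hg₁eq]
    · rw [← hfg₂, hf₂eq, hg₂eq]
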